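/- arXiv:0706.1936 — 3 statements merged into one kernel-verified Lean document; each statement's English description precedes it below -/
import Mathlib

section
/- Let μ be a positive measure on the closure of a rooted tree T and let σ(α) = ρ(α)^{1−p'} μ(S̄(α))^{p'} where S̄(α) is the closure of the successor set of α. If the tree condition Σ_{β ≥ α} σ(β) ≤ C·μ(S̄(α)) holds for all α ∈ T, then the maximal operator Mg(α) = max_{o ≤ β ≤ α} (1/μ(S̄(α))) ∫_{S̄(β)} g dμ is of weak type (1,1) from L¹(μ) to L^{1,∞}(T, σ): σ({α : Mg(α) > λ}) ≤ C λ^{-1} ∫ g dμ for all g ≥ 0 and λ > 0. -/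
set_option maxHeartbeats 1000000

open MeasureTheory ENNReal

/-- Weak type (1,1) for the tree maximal function under the tree condition.
`T` is a rooted tree (root = `⊥`, tree order: any two elements below a common
element are comparable), `Ω` plays the role of the closure `T̄` of the tree,
and `Sbar α ⊆ Ω` is the closure of the successor set (shadow) of `α`.
`σ(α) = ρ(α)^(1−p') μ(S̄(α))^(p')`. If the tree condition
`Σ_{β ≥ α} σ(β) ≤ C μ(S̄(α))` holds, then for every `g ≥ 0` and `λ > 0`,
`σ({α : Mg(α) > λ}) ≤ C λ⁻¹ ∫ g dμ`, where
`Mg(α) = max_{⊥ ≤ β ≤ α} (1/μ(S̄(β))) ∫_{S̄(β)} g dμ`. -/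
theorem stmt3 {T Ω : Type*} [PartialOrder T] [OrderBot T] [Countable T]
    [WellFoundedLT T] [MeasurableSpace Ω] (μ : Measure Ω) (Sbar : T → Set Ω)
    (hmeas : ∀ α, MeasurableSet (Sbar α))
    (hanti : ∀ α β : T, α ≤ β → Sbar β ⊆ Sbar α)
    (hdisj : ∀ α β : T, ¬ α ≤ β → ¬ β ≤ α → Sbar α ∩ Sbar β = ∅)
    (hpos : ∀ α, 0 < μ (Sbar α))
    (p p' : ℝ) (hp : 1 < p) (hp' : p' = p / (p - 1))
    (ρ : T → ℝ≥0∞) (hρ : ∀ α, ρ α ≠ 0 ∧ ρ α ≠ ⊤)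
    (C : ℝ≥0∞) (hC : C ≠ ⊤)
    (htc : ∀ α : T,
      ∑' β : {β : T // α ≤ β}, ρ β.1 ^ (1 - p') * μ (Sbar β.1) ^ p' ≤ C * μ (Sbar α)) :
    ∀ g : Ω → ℝ≥0∞, Measurable g → ∀ lam : ℝ≥0∞, 0 < lam → lam ≠ ⊤ →
      ∑' α : {α : T |
          lam < ⨆ β ∈ Set.Iic α, (∫⁻ x in Sbar β, g x ∂μ) / μ (Sbar β)},
        ρ α.1 ^ (1 - p') * μ (Sbar α.1) ^ p'
      ≤ C * lam⁻¹ * ∫⁻ x, g x ∂μ := by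
  intro g hg lam hlam0 hlamt
  classical
  letI : MeasurableSpace T := ⊤
  haveI : MeasurableSingletonClass T := ⟨fun _ => trivial⟩
  set σ : T → ℝ≥0∞ := fun α => ρ α ^ (1 - p') * μ (Sbar α) ^ p' with hσ
  set P : T → Prop := fun β => lam * μ (Sbar β) < ∫⁻ x in Sbar β, g x ∂μ with hP
  set B : Set T := {β | P β ∧ ∀ γ, γ < β → ¬ P γ} with hB
  set E : Set T := {α : T |
      lam < ⨆ β ∈ Set.Iic α, (∫⁻ x in Sbar β, g x ∂μ) / μ (Sbar β)} with hE
  -- every α in E is above some β in B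
  have hcover : E ⊆ ⋃ β ∈ B, Set.Ici β := by
    intro α hα
    have h1 : ∃ β ≤ α, lam < (∫⁻ x in Sbar β, g x ∂μ) / μ (Sbar β) := by
      simpa [E, lt_iSup_iff] using hα
    obtain ⟨β, hβα, hβ⟩ := h1
    have hμt : μ (Sbar β) ≠ ⊤ := by
      intro ht
      rcases eq_or_ne (∫⁻ x in Sbar β, g x ∂μ) ⊤ with hI | hI
      · rw [ht, hI] at hβ
        simp at hβ
      · rw [ht, ENNReal.div_eq_zero_iff.2 (Or.inr rfl)] at hβ
        exact (not_lt_of_ge (zero_le : (0 : ℝ≥0∞) ≤ lam)) hβ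
    have hPβ : P β := by
      rw [hP]
      exact (ENNReal.lt_div_iff_mul_lt (Or.inl (hpos β).ne') (Or.inl hμt)).1 hβ
    obtain ⟨β₀, ⟨hPβ₀, hβ₀α⟩, hmin⟩ :=
      (wellFounded_lt (α := T)).has_min {γ | P γ ∧ γ ≤ α} ⟨β, hPβ, hβα⟩
    exact Set.mem_biUnion (show β₀ ∈ B from ⟨hPβ₀, fun γ hγ hPγ =>
      hmin γ ⟨hPγ, hγ.le.trans hβ₀α⟩ hγ⟩) hβ₀α
  -- elements of B are pairwise incomparable, hence shadows are pairwise disjoint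
  have hBdisj : (B : Set T).Pairwise (Function.onFun Disjoint fun β => Sbar β) := by
    intro β₁ h₁ β₂ h₂ hne
    have hle : ¬ β₁ ≤ β₂ := fun h => h₂.2 β₁ (lt_of_le_of_ne h hne) h₁.1
    have hle' : ¬ β₂ ≤ β₁ := fun h => h₁.2 β₂ (lt_of_le_of_ne h (Ne.symm hne)) h₂.1
    exact Set.disjoint_iff_inter_eq_empty.2 (hdisj β₁ β₂ hle hle')
  -- the measure ν with density σ w.r.t. counting measure on T
  set ν : Measure T := Measure.count.withDensity σ with hν
  have hνapp : ∀ s : Set T, ν s = ∑' α : s, σ α := by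
    intro s
    rw [hν, withDensity_apply _ MeasurableSpace.measurableSet_top,
      ← lintegral_indicator MeasurableSpace.measurableSet_top, lintegral_count]
    exact (tsum_subtype s σ).symm
  haveI hBc : Countable B := Set.to_countable B
  -- each μ (Sbar β), β ∈ B, is controlled by the integral over the shadow
  have hμle : ∀ β ∈ B, μ (Sbar β) ≤ lam⁻¹ * ∫⁻ x in Sbar β, g x ∂μ := by
    intro β hβ
    have := hβ.1
    rw [hP] at this
    rw [← ENNReal.div_eq_inv_mul]
    exact (ENNReal.le_div_iff_mul_le (Or.inl hlam0.ne') (Or.inl hlamt)).2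
      (by rw [mul_comm]; exact this.le)
  calc ∑' α : E, σ α = ν E := (hνapp E).symm
    _ ≤ ν (⋃ β ∈ B, Set.Ici β) := measure_mono hcover
    _ ≤ ∑' β : B, ν (Set.Ici β.1) := measure_biUnion_le ν (Set.to_countable B) _
    _ ≤ ∑' β : B, C * μ (Sbar β.1) := by
        refine ENNReal.tsum_le_tsum fun β => ?_
        rw [hνapp]
        exact htc β.1
    _ = C * ∑' β : B, μ (Sbar β.1) := ENNReal.tsum_mul_left
    _ ≤ C * ∑' β : B, lam⁻¹ * ∫⁻ x in Sbar β.1, g x ∂μ := by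
        gcongr with β
        exact hμle β.1 β.2
    _ = C * (lam⁻¹ * ∑' β : B, ∫⁻ x in Sbar β.1, g x ∂μ) := by
        rw [ENNReal.tsum_mul_left]
    _ ≤ C * (lam⁻¹ * ∫⁻ x, g x ∂μ) := by
        refine mul_le_mul_right (mul_le_mul_right ?_ lam⁻¹) C
        rw [← lintegral_iUnion (fun β : B => hmeas β.1)
          (fun β₁ β₂ hne => hBdisj β₁.2 β₂.2 (fun h => hne (Subtype.ext h))) g]
        exact setLIntegral_le_lintegral _ g
    _ = C * lam⁻¹ * ∫⁻ x, g x ∂μ := by ring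
end

section
/- Let T be a rooted tree, 1 < p < ∞, ρ a positive weight on T, μ a positive measure on the closure T̄ of T. The tree condition Σ_{β ≥ α} ρ(β)^{1−p'} μ(S̄(β))^{p'} ≤ C·μ(S̄(α)) for all α ∈ T is equivalent to the maximal inequality Σ_{α ∈ T} (Mg(α))^{p'} σ(α) ≤ C' ∫_{T̄} g^{p'} dμ for all g ≥ 0, where Mg(α) = max_{o ≤ β ≤ α} (1/μ(S̄(β))) ∫_{S̄(β)} g dμ and σ(α) = ρ(α)^{1−p'} μ(S̄(α))^{p'}. -/
open MeasureTheory ENNReal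

noncomputable def Mop {T Ω : Type*} [PartialOrder T] [MeasurableSpace Ω] (μ : Measure Ω)
    (Sbar : T → Set Ω) (g : Ω → ℝ≥0∞) (α : T) : ℝ≥0∞ :=
  ⨆ β ∈ Set.Iic α, (∫⁻ x in Sbar β, g x ∂μ) / μ (Sbar β)

section
variable {T Ω : Type*} [PartialOrder T] [MeasurableSpace Ω] {μ : Measure Ω} {Sbar : T → Set Ω}

lemma le_Mop {g : Ω → ℝ≥0∞} {α β : T} (h : β ≤ α) :
    (∫⁻ x in Sbar β, g x ∂μ) / μ (Sbar β) ≤ Mop μ Sbar g α :=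
  le_biSup (fun β => (∫⁻ x in Sbar β, g x ∂μ) / μ (Sbar β)) (Set.mem_Iic.mpr h)

lemma exists_of_lt_Mop {g : Ω → ℝ≥0∞} {α : T} {lam : ℝ≥0∞} (h : lam < Mop μ Sbar g α) :
    ∃ β ≤ α, lam < (∫⁻ x in Sbar β, g x ∂μ) / μ (Sbar β) := by
  rw [Mop, lt_iSup_iff] at h
  obtain ⟨β, hβ⟩ := h
  rw [lt_iSup_iff] at hβ
  obtain ⟨hle, h⟩ := hβ
  exact ⟨β, hle, h⟩

lemma weak_type [Countable T] [WellFoundedLT T]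
    (hmeas : ∀ α, MeasurableSet (Sbar α))
    (hdisj : ∀ α β : T, ¬ α ≤ β → ¬ β ≤ α → Sbar α ∩ Sbar β = ∅)
    (σ : T → ℝ≥0∞) (C : ℝ≥0∞)
    (htree : ∀ α : T, ∑' β : {β : T // α ≤ β}, σ β.1 ≤ C * μ (Sbar α))
    (g : Ω → ℝ≥0∞) (lam : ℝ≥0∞) (hl0 : lam ≠ 0) (hlt : lam ≠ ⊤) :
    ∑' α : {α : T // lam < Mop μ Sbar g α}, σ α.1
      ≤ C * ((∫⁻ x, g x ∂μ) / lam) := by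
  classical
  set E : Set T := {α | lam < Mop μ Sbar g α} with hE
  set Γ : Set T := {γ | γ ∈ E ∧ ∀ β ∈ E, ¬ β < γ} with hΓ
  have wf : WellFounded ((· < ·) : T → T → Prop) := wellFounded_lt
  have hmin : ∀ α : E, ∃ γ : Γ, (γ : T) ≤ (α : T) := by
    rintro ⟨α, hα⟩
    have hne : {β | β ∈ E ∧ β ≤ α}.Nonempty := ⟨α, hα, le_rfl⟩
    refine ⟨⟨wf.min _ hne, (wf.min_mem _ hne).1, ?_⟩, (wf.min_mem _ hne).2⟩
    intro β hβ hlt'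
    exact wf.not_lt_min {β | β ∈ E ∧ β ≤ α} (x := β) ⟨hβ, hlt'.le.trans (wf.min_mem _ hne).2⟩ hlt'
  choose c hc using hmin
  -- each minimal element satisfies the testing inequality
  have hkey : ∀ γ : T, γ ∈ Γ → μ (Sbar γ) ≤ (∫⁻ x in Sbar γ, g x ∂μ) / lam := by
    intro γ hγ
    obtain ⟨β, hβle, hβ⟩ := exists_of_lt_Mop hγ.1
    have hβE : β ∈ E := lt_of_lt_of_le hβ (le_Mop le_rfl)
    have hβγ : β = γ := by
      by_contra hne
      exact hγ.2 β hβE (lt_of_le_of_ne hβle hne)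
    subst hβγ
    -- hβ : lam < X / Y
    have h1 : lam * μ (Sbar β) ≤ ∫⁻ x in Sbar β, g x ∂μ := ENNReal.mul_le_of_le_div hβ.le
    rw [ENNReal.le_div_iff_mul_le (Or.inl hl0) (Or.inl hlt)]
    rwa [mul_comm]
  have hinc : ∀ γ₁ γ₂ : Γ, γ₁ ≠ γ₂ → Sbar (γ₁ : T) ∩ Sbar (γ₂ : T) = ∅ := by
    rintro ⟨γ₁, h₁⟩ ⟨γ₂, h₂⟩ hne
    have hne' : γ₁ ≠ γ₂ := fun h => hne (Subtype.ext h)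
    refine hdisj _ _ (fun hle => ?_) (fun hle => ?_)
    · exact h₂.2 γ₁ h₁.1 (lt_of_le_of_ne hle hne')
    · exact h₁.2 γ₂ h₂.1 (lt_of_le_of_ne hle (Ne.symm hne'))
  calc ∑' α : E, σ α.1
      ≤ ∑' x : Σ γ : Γ, {β : T // (γ : T) ≤ β}, σ x.2.1 := by
        have hinj : Function.Injective
            (fun α : E => (⟨c α, ⟨(α : T), hc α⟩⟩ : Σ γ : Γ, {β : T // (γ : T) ≤ β})) := by
          intro a b h
          exact Subtype.ext (congrArg (fun x : Σ γ : Γ, {β : T // (γ : T) ≤ β} => x.2.1) h)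
        exact ENNReal.tsum_comp_le_tsum_of_injective hinj _
    _ = ∑' γ : Γ, ∑' β : {β : T // (γ : T) ≤ β}, σ β.1 := ENNReal.tsum_sigma' _
    _ ≤ ∑' γ : Γ, C * μ (Sbar (γ : T)) := ENNReal.tsum_le_tsum fun γ => htree _
    _ ≤ ∑' γ : Γ, C * lam⁻¹ * ∫⁻ x in Sbar (γ : T), g x ∂μ := by
        refine ENNReal.tsum_le_tsum fun γ => ?_
        rw [mul_assoc]
        refine mul_le_mul_right ?_ C
        calc μ (Sbar (γ : T)) ≤ (∫⁻ x in Sbar (γ : T), g x ∂μ) / lam := hkey _ γ.2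
          _ = lam⁻¹ * ∫⁻ x in Sbar (γ : T), g x ∂μ := by
              rw [div_eq_mul_inv, mul_comm]
    _ = C * lam⁻¹ * ∑' γ : Γ, ∫⁻ x in Sbar (γ : T), g x ∂μ := ENNReal.tsum_mul_left
    _ ≤ C * lam⁻¹ * ∫⁻ x, g x ∂μ := by
        refine mul_le_mul_right ?_ _
        rw [← lintegral_iUnion (fun γ : Γ => hmeas (γ : T))
          (fun γ₁ γ₂ hne => Set.disjoint_iff_inter_eq_empty.2 (hinc γ₁ γ₂ hne))]
        exact setLIntegral_le_lintegral _ _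
    _ = C * ((∫⁻ x, g x ∂μ) / lam) := by rw [div_eq_mul_inv, mul_comm (∫⁻ x, g x ∂μ), mul_assoc]
end

-- helper lemmas about (2 : ℝ≥0∞) ^ (t : ℝ)
lemma two_rpow_ne_top (t : ℝ) : (2 : ℝ≥0∞) ^ t ≠ ⊤ := by
  intro h
  rcases ENNReal.rpow_eq_top_iff.1 h with ⟨h1, _⟩ | ⟨h1, _⟩
  · exact two_ne_zero h1
  · exact ENNReal.ofNat_ne_top h1

lemma two_rpow_ne_zero (t : ℝ) : (2 : ℝ≥0∞) ^ t ≠ 0 :=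
  (ENNReal.rpow_pos (by norm_num) ENNReal.ofNat_ne_top).ne'

lemma two_rpow_add (s t : ℝ) : (2 : ℝ≥0∞) ^ (s + t) = 2 ^ s * 2 ^ t :=
  ENNReal.rpow_add s t two_ne_zero ENNReal.ofNat_ne_top

lemma lt_of_two_rpow_lt {s t : ℝ} (h : (2 : ℝ≥0∞) ^ s < 2 ^ t) : s < t := by
  by_contra hc
  exact absurd (ENNReal.rpow_le_rpow_of_exponent_le one_le_two (not_lt.1 hc)) (not_le.2 h)

section
variable {T Ω : Type*} [PartialOrder T] [MeasurableSpace Ω] {μ : Measure Ω} {Sbar : T → Set Ω}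

lemma Mop_split (hg : Measurable g) (c : ℝ≥0∞) (α : T) :
    Mop μ Sbar g α ≤ c + Mop μ Sbar (fun x => if c < g x then g x else 0) α := by
  refine iSup₂_le fun β hβ => ?_
  set g₁ : Ω → ℝ≥0∞ := fun x => if c < g x then 0 else g x with hg₁
  set g₂ : Ω → ℝ≥0∞ := fun x => if c < g x then g x else 0 with hg₂
  have hsplit : ∀ x, g x = g₁ x + g₂ x := by
    intro x; by_cases h : c < g x <;> simp [hg₁, hg₂, h]
  have hm₁ : Measurable g₁ := Measurable.ite (measurableSet_lt measurable_const hg)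
    measurable_const hg
  have h1 : (∫⁻ x in Sbar β, g x ∂μ) = (∫⁻ x in Sbar β, g₁ x ∂μ) + ∫⁻ x in Sbar β, g₂ x ∂μ := by
    rw [← lintegral_add_left hm₁]
    exact lintegral_congr fun x => hsplit x
  rw [h1, ENNReal.add_div]
  refine add_le_add ?_ (le_Mop (Set.mem_Iic.1 hβ))
  refine ENNReal.div_le_of_le_mul ?_
  calc (∫⁻ x in Sbar β, g₁ x ∂μ) ≤ ∫⁻ _ in Sbar β, c ∂μ := by
        refine lintegral_mono fun x => ?_
        by_cases h : c < g x <;> simp [hg₁, h, le_of_not_gt]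
    _ = c * μ (Sbar β) := by rw [setLIntegral_const]
end

lemma cutoff_pointwise {q : ℝ} (hq : 1 ≤ q) {c : ℝ≥0∞} (hc0 : c ≠ 0) (hct : c ≠ ⊤)
    (v : ℝ≥0∞) : (if c < v then v else 0) ≤ c ^ (1 - q) * v ^ q := by
  by_cases h : c < v
  · simp only [h, if_true]
    by_cases hvt : v = ⊤
    · subst hvt
      rw [ENNReal.top_rpow_of_pos (by linarith), ENNReal.mul_top
        (ENNReal.rpow_pos (pos_iff_ne_zero.2 hc0) hct).ne']
    · have hv0 : v ≠ 0 := fun h0 => absurd (h0 ▸ h) (not_lt.2 (zero_le (a := c)))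
      calc v = c ^ (1 - q) * c ^ (q - 1) * v := by
            rw [← ENNReal.rpow_add _ _ hc0 hct]
            norm_num
        _ ≤ c ^ (1 - q) * v ^ (q - 1) * v := by
            refine mul_le_mul_left (mul_le_mul_right ?_ _) _
            exact ENNReal.rpow_le_rpow h.le (by linarith)
        _ = c ^ (1 - q) * v ^ q := by
            rw [mul_assoc]
            congr 1
            rw [show v ^ q = v ^ (q - 1) * v ^ (1 : ℝ) by
              rw [← ENNReal.rpow_add _ _ hv0 hvt]; norm_num, ENNReal.rpow_one]
  · simp [h]

lemma rpow_ne_top' {x : ℝ≥0∞} (h0 : x ≠ 0) (ht : x ≠ ⊤) (y : ℝ) : x ^ y ≠ ⊤ := by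
  simp [ENNReal.rpow_eq_top_iff, h0, ht]

section
variable {T Ω : Type*} [PartialOrder T] [MeasurableSpace Ω] {μ : Measure Ω} {Sbar : T → Set Ω}

lemma cutoff_lintegral {q : ℝ} (hq : 1 ≤ q) {c : ℝ≥0∞} (hc0 : c ≠ 0) (hct : c ≠ ⊤)
    (g : Ω → ℝ≥0∞) :
    (∫⁻ x, (if c < g x then g x else 0) ∂μ) ≤ c ^ (1 - q) * ∫⁻ x, g x ^ q ∂μ := by
  calc ∫⁻ x, (if c < g x then g x else 0) ∂μ ≤ ∫⁻ x, c ^ (1 - q) * g x ^ q ∂μ :=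
        lintegral_mono fun x => cutoff_pointwise hq hc0 hct (g x)
    _ = c ^ (1 - q) * ∫⁻ x, g x ^ q ∂μ := lintegral_const_mul' _ _ (rpow_ne_top' hc0 hct _)

lemma Mop_ne_top [Countable T] [WellFoundedLT T]
    (hmeas : ∀ α, MeasurableSet (Sbar α))
    (hdisj : ∀ α β : T, ¬ α ≤ β → ¬ β ≤ α → Sbar α ∩ Sbar β = ∅)
    (σ : T → ℝ≥0∞) (hσ : ∀ α, σ α ≠ 0) {C : ℝ≥0∞} (hC : C ≠ ⊤)
    (htree : ∀ α : T, ∑' β : {β : T // α ≤ β}, σ β.1 ≤ C * μ (Sbar α))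
    {g : Ω → ℝ≥0∞} (hg : Measurable g) {q : ℝ} (hq : 1 < q)
    (hI : (∫⁻ x, g x ^ q ∂μ) ≠ ⊤) (α : T) : Mop μ Sbar g α ≠ ⊤ := by
  intro htop
  set K := C * ∫⁻ x, g x ^ q ∂μ with hK
  have hKt : K ≠ ⊤ := ENNReal.mul_ne_top hC hI
  obtain ⟨n, hn⟩ := ENNReal.exists_inv_two_pow_lt (a := σ α / (K + 1))
    (ENNReal.div_pos (hσ α) (by simp [hKt])).ne'
  have hKn : K * 2⁻¹ ^ n < σ α := by
    calc K * 2⁻¹ ^ n ≤ (K + 1) * 2⁻¹ ^ n := mul_le_mul_left le_self_add _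
      _ < (K + 1) * (σ α / (K + 1)) := by
          rw [ENNReal.mul_lt_mul_iff_right (by simp) (by simp [hKt])]
          exact hn
      _ = σ α := ENNReal.mul_div_cancel' (by simp) (by simp [hKt])
  set c : ℝ≥0∞ := 2 ^ (n : ℝ) with hc
  have hc0 : c ≠ 0 := two_rpow_ne_zero _
  have hct : c ≠ ⊤ := two_rpow_ne_top _
  set g₂ : Ω → ℝ≥0∞ := fun x => if c < g x then g x else 0 with hg₂
  have hsplit := Mop_split (μ := μ) (Sbar := Sbar) hg c α
  have hMg₂ : c < Mop μ Sbar g₂ α := by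
    rw [htop] at hsplit
    by_contra hle
    have hne : Mop μ Sbar g₂ α ≠ ⊤ := ne_top_of_le_ne_top hct (not_lt.1 hle)
    exact (ENNReal.add_ne_top.2 ⟨hct, hne⟩) (top_le_iff.1 hsplit)
  have hle1 : σ α ≤ ∑' β : {β : T // c < Mop μ Sbar g₂ β}, σ β.1 :=
    ENNReal.le_tsum (⟨α, hMg₂⟩ : {β : T // c < Mop μ Sbar g₂ β})
  have hle2 := weak_type hmeas hdisj σ C htree g₂ c hc0 hct
  have hle3 : C * ((∫⁻ x, g₂ x ∂μ) / c) ≤ K * c ^ (-q) := by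
    have hstep : (∫⁻ x, g₂ x ∂μ) / c ≤ (∫⁻ x, g x ^ q ∂μ) * c ^ (-q) := by
      calc (∫⁻ x, g₂ x ∂μ) / c ≤ (c ^ (1 - q) * ∫⁻ x, g x ^ q ∂μ) / c :=
            ENNReal.div_le_div_right (cutoff_lintegral hq.le hc0 hct g) _
        _ = (∫⁻ x, g x ^ q ∂μ) * c ^ (-q) := by
            rw [div_eq_mul_inv, ← ENNReal.rpow_neg_one c, mul_comm (c ^ (1 - q)), mul_assoc,
              ← ENNReal.rpow_add _ _ hc0 hct]
            congr 1
            ring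
    calc C * ((∫⁻ x, g₂ x ∂μ) / c) ≤ C * ((∫⁻ x, g x ^ q ∂μ) * c ^ (-q)) :=
          mul_le_mul_right hstep _
      _ = K * c ^ (-q) := by rw [hK, mul_assoc]
  have hlast : K * c ^ (-q) ≤ K * 2⁻¹ ^ n := by
    refine mul_le_mul_right ?_ _
    have h1 : c ^ (-q) = 2 ^ ((n : ℝ) * (-q)) := by rw [hc, ← ENNReal.rpow_mul]
    have h2 : ((2 : ℝ≥0∞)⁻¹) ^ n = 2 ^ ((n : ℝ) * (-1)) := by
      rw [mul_neg_one, ENNReal.rpow_neg, ENNReal.rpow_natCast]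
      exact ENNReal.inv_pow.symm
    rw [h1, h2]
    exact ENNReal.rpow_le_rpow_of_exponent_le one_le_two
      (by nlinarith [Nat.cast_nonneg (α := ℝ) n])
  exact absurd ((hle1.trans hle2).trans (hle3.trans hlast)) (not_le.2 hKn)
end

lemma geom_const_ne_top {q : ℝ} (hq : 1 < q) : ((1 : ℝ≥0∞) - 2 ^ (1 - q))⁻¹ ≠ ⊤ := by
  rw [Ne, ENNReal.inv_eq_top, tsub_eq_zero_iff_le]
  intro h
  have h2 : (2 : ℝ≥0∞) ^ (1 - q) < 2 ^ (0 : ℝ) :=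
    ENNReal.rpow_lt_rpow_of_exponent_lt one_lt_two ENNReal.ofNat_ne_top (by linarith)
  rw [ENNReal.rpow_zero] at h2
  exact absurd h (not_le.2 h2)

lemma geom_const_ne_zero {q : ℝ} (hq : 1 < q) : ((1 : ℝ≥0∞) - 2 ^ (1 - q))⁻¹ ≠ 0 := by
  rw [Ne, ENNReal.inv_eq_zero]
  exact (ne_top_of_le_ne_top ENNReal.one_ne_top tsub_le_self)

lemma pointwise_sum {q : ℝ} (hq : 1 < q) (v : ℝ≥0∞) :
    ∑' k : ℤ, 2 ^ ((k : ℝ) * (q - 1)) * (if (2 : ℝ≥0∞) ^ ((k : ℝ) - 1) < v then v else 0)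
      ≤ 2 ^ (q - 1) * (1 - 2 ^ (1 - q))⁻¹ * v ^ q := by
  by_cases hv0 : v = 0
  · simp [hv0]
  by_cases hvt : v = ⊤
  · rw [hvt, ENNReal.top_rpow_of_pos (by linarith), ENNReal.mul_top
      (mul_ne_zero (two_rpow_ne_zero _) (geom_const_ne_zero hq))]
    exact le_top
  obtain ⟨m, hm⟩ := ENNReal.exists_mem_Ioc_zpow hv0 hvt one_lt_two ENNReal.ofNat_ne_top
  have h2m : (2 : ℝ≥0∞) ^ ((m : ℝ)) = 2 ^ m := ENNReal.rpow_intCast 2 m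
  have hstep1 : ∑' k : ℤ, 2 ^ ((k : ℝ) * (q - 1)) * (if (2 : ℝ≥0∞) ^ ((k : ℝ) - 1) < v then v else 0)
      ≤ ∑' k : ℤ, (if k ≤ m + 1 then 2 ^ ((k : ℝ) * (q - 1)) * v else 0) := by
    refine ENNReal.tsum_le_tsum fun k => ?_
    by_cases h : (2 : ℝ≥0∞) ^ ((k : ℝ) - 1) < v
    · have hklt : k ≤ m + 1 := by
        have hv2 : v ≤ 2 ^ ((m : ℝ) + 1) := by
          rw [show ((m : ℝ) + 1) = ((m + 1 : ℤ) : ℝ) by push_cast; ring,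
            ENNReal.rpow_intCast 2 (m + 1)]
          exact hm.2
        have := lt_of_two_rpow_lt (lt_of_lt_of_le h hv2)
        have : (k : ℝ) < (m : ℝ) + 2 := by linarith
        have : k < m + 2 := by exact_mod_cast this
        omega
      rw [if_pos h, if_pos hklt]
    · rw [if_neg h]
      simp
  have hinj : Function.Injective (fun j : ℕ => m + 1 - (j : ℤ)) := by
    intro a b h
    simpa using h
  have hsupp : Function.support (fun k : ℤ => if k ≤ m + 1 then 2 ^ ((k : ℝ) * (q - 1)) * v else 0)
      ⊆ Set.range (fun j : ℕ => m + 1 - (j : ℤ)) := by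
    intro k hk
    have hkle : k ≤ m + 1 := by
      by_contra h
      simp [h] at hk
    exact ⟨(m + 1 - k).toNat, by show m + 1 - ((m + 1 - k).toNat : ℤ) = k; omega⟩
  have hstep2 : ∑' k : ℤ, (if k ≤ m + 1 then 2 ^ ((k : ℝ) * (q - 1)) * v else 0)
      = ∑' j : ℕ, 2 ^ (((m : ℝ) + 1) * (q - 1)) * ((2 : ℝ≥0∞) ^ (1 - q)) ^ j * v := by
    rw [← Function.Injective.tsum_eq hinj hsupp]
    refine tsum_congr fun j => ?_
    have hle : m + 1 - (j : ℤ) ≤ m + 1 := by omega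
    rw [if_pos hle]
    congr 1
    have hcast : ((m + 1 - (j : ℤ) : ℤ) : ℝ) = (m : ℝ) + 1 - (j : ℝ) := by push_cast; ring
    rw [hcast, show ((m : ℝ) + 1 - (j : ℝ)) * (q - 1)
        = ((m : ℝ) + 1) * (q - 1) + (1 - q) * (j : ℝ) by ring, two_rpow_add]
    congr 1
    rw [← ENNReal.rpow_natCast ((2 : ℝ≥0∞) ^ (1 - q)) j, ← ENNReal.rpow_mul]
  have hgeom : ∑' j : ℕ, 2 ^ (((m : ℝ) + 1) * (q - 1)) * ((2 : ℝ≥0∞) ^ (1 - q)) ^ j * v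
      = 2 ^ (((m : ℝ) + 1) * (q - 1)) * (1 - 2 ^ (1 - q))⁻¹ * v := by
    calc ∑' j : ℕ, 2 ^ (((m : ℝ) + 1) * (q - 1)) * ((2 : ℝ≥0∞) ^ (1 - q)) ^ j * v
        = (∑' j : ℕ, ((2 : ℝ≥0∞) ^ (1 - q)) ^ j) * (2 ^ (((m : ℝ) + 1) * (q - 1)) * v) := by
          rw [← ENNReal.tsum_mul_right]
          refine tsum_congr fun j => by ring
      _ = 2 ^ (((m : ℝ) + 1) * (q - 1)) * (1 - 2 ^ (1 - q))⁻¹ * v := by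
          rw [ENNReal.tsum_geometric]
          ring
  have hfinal : 2 ^ (((m : ℝ) + 1) * (q - 1)) * (1 - 2 ^ (1 - q))⁻¹ * v
      ≤ 2 ^ (q - 1) * (1 - 2 ^ (1 - q))⁻¹ * v ^ q := by
    have h1 : (2 : ℝ≥0∞) ^ (((m : ℝ) + 1) * (q - 1)) = 2 ^ (q - 1) * (2 ^ ((m : ℝ))) ^ (q - 1) := by
      rw [← ENNReal.rpow_mul,
        show ((m : ℝ) + 1) * (q - 1) = (q - 1) + (m : ℝ) * (q - 1) by ring, two_rpow_add]
    have h2 : ((2 : ℝ≥0∞) ^ ((m : ℝ))) ^ (q - 1) ≤ v ^ (q - 1) := by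
      refine ENNReal.rpow_le_rpow ?_ (by linarith)
      rw [h2m]
      exact hm.1.le
    have h3 : v * v ^ (q - 1) = v ^ q := by
      rw [show v ^ q = v ^ ((1 : ℝ) + (q - 1)) by norm_num,
        ENNReal.rpow_add _ _ hv0 hvt, ENNReal.rpow_one]
    calc 2 ^ (((m : ℝ) + 1) * (q - 1)) * (1 - 2 ^ (1 - q))⁻¹ * v
        = 2 ^ (q - 1) * (1 - 2 ^ (1 - q))⁻¹ * (v * (2 ^ ((m : ℝ))) ^ (q - 1)) := by
          rw [h1]; ring
      _ ≤ 2 ^ (q - 1) * (1 - 2 ^ (1 - q))⁻¹ * (v * v ^ (q - 1)) := by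
          exact mul_le_mul_right (mul_le_mul_right h2 v) _
      _ = 2 ^ (q - 1) * (1 - 2 ^ (1 - q))⁻¹ * v ^ q := by rw [h3]
  exact hstep1.trans (le_of_eq (hstep2.trans hgeom) |>.trans hfinal)

section
variable {T Ω : Type*} [PartialOrder T] [Countable T] [WellFoundedLT T]
  [MeasurableSpace Ω] {μ : Measure Ω} {Sbar : T → Set Ω}

lemma strong_type
    (hmeas : ∀ α, MeasurableSet (Sbar α))
    (hdisj : ∀ α β : T, ¬ α ≤ β → ¬ β ≤ α → Sbar α ∩ Sbar β = ∅)
    (σ : T → ℝ≥0∞) (hσ : ∀ α, σ α ≠ 0) {C : ℝ≥0∞} (hC : C ≠ ⊤)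
    (htree : ∀ α : T, ∑' β : {β : T // α ≤ β}, σ β.1 ≤ C * μ (Sbar α))
    {q : ℝ} (hq : 1 < q) (g : Ω → ℝ≥0∞) (hg : Measurable g) :
    ∑' α : T, (Mop μ Sbar g α) ^ q * σ α ≤
      (C * 2 ^ (q + 1) * (2 ^ (q - 1) * (1 - 2 ^ (1 - q))⁻¹) + 1) * ∫⁻ x, g x ^ q ∂μ := by
  classical
  set D : ℝ≥0∞ := C * 2 ^ (q + 1) * (2 ^ (q - 1) * (1 - 2 ^ (1 - q))⁻¹) with hD
  set I := ∫⁻ x, g x ^ q ∂μ with hI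
  by_cases hIt : I = ⊤
  · rw [hIt, ENNReal.mul_top (by simp)]
    exact le_top
  have hMfin : ∀ α, Mop μ Sbar g α ≠ ⊤ :=
    Mop_ne_top hmeas hdisj σ hσ hC htree hg hq hIt
  set F : T → ℝ≥0∞ := fun α => (Mop μ Sbar g α) ^ q * σ α with hF
  set N : Set T := {α | Mop μ Sbar g α ≠ 0} with hN
  have hsupp : Function.support F ⊆ N := by
    intro α hα
    simp only [hN, Set.mem_setOf_eq]
    intro h0
    apply hα
    simp [hF, h0, ENNReal.zero_rpow_of_pos (by linarith : (0 : ℝ) < q)]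
  have hA : ∑' α : T, F α = ∑' α : N, F α.1 := (tsum_subtype_eq_of_support_subset hsupp).symm
  have hkch : ∀ α : N, ∃ k : ℤ,
      Mop μ Sbar g α.1 ∈ Set.Ioc ((2 : ℝ≥0∞) ^ k) (2 ^ (k + 1)) := fun α =>
    ENNReal.exists_mem_Ioc_zpow α.2 (hMfin α.1) one_lt_two ENNReal.ofNat_ne_top
  choose k hk using hkch
  set f : (Σ k : ℤ, {α : T // (2 : ℝ≥0∞) ^ k < Mop μ Sbar g α}) → ℝ≥0∞ :=
    fun x => 2 ^ (((x.1 : ℝ) + 1) * q) * σ x.2.1 with hf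
  set j : N → Σ k : ℤ, {α : T // (2 : ℝ≥0∞) ^ k < Mop μ Sbar g α} :=
    fun α => ⟨k α, ⟨α.1, (hk α).1⟩⟩ with hj
  have hjinj : Function.Injective j := by
    intro a b h
    have := congrArg (fun x : Σ k : ℤ, {α : T // (2 : ℝ≥0∞) ^ k < Mop μ Sbar g α} => x.2.1) h
    exact Subtype.ext this
  have hbd : ∀ α : N, F α.1 ≤ f (j α) := by
    intro α
    refine mul_le_mul_left ?_ _
    calc (Mop μ Sbar g α.1) ^ q ≤ ((2 : ℝ≥0∞) ^ (k α + 1)) ^ q :=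
          ENNReal.rpow_le_rpow (hk α).2 (by linarith)
      _ = 2 ^ (((k α : ℝ) + 1) * q) := by
          rw [show ((k α : ℝ) + 1) = ((k α + 1 : ℤ) : ℝ) by push_cast; ring,
            ← ENNReal.rpow_intCast 2 (k α + 1), ← ENNReal.rpow_mul]
  -- the weak-type estimate for each dyadic level
  have hweak : ∀ kk : ℤ, ∑' α : {α : T // (2 : ℝ≥0∞) ^ kk < Mop μ Sbar g α}, σ α.1
      ≤ C * ((∫⁻ x, (if (2 : ℝ≥0∞) ^ ((kk : ℝ) - 1) < g x then g x else 0) ∂μ)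
          / (2 ^ ((kk : ℝ) - 1))) := by
    intro kk
    set c : ℝ≥0∞ := 2 ^ ((kk : ℝ) - 1) with hc
    set g₂ : Ω → ℝ≥0∞ := fun x => if c < g x then g x else 0 with hg₂
    have hincl : ∀ α : T, (2 : ℝ≥0∞) ^ kk < Mop μ Sbar g α → c < Mop μ Sbar g₂ α := by
      intro α h
      by_contra hle
      have h1 : Mop μ Sbar g α ≤ c + c :=
        (Mop_split hg c α).trans (add_le_add_right (not_lt.1 hle) c)
      have h2 : c + c = 2 ^ ((kk : ℝ)) := by
        rw [show (kk : ℝ) = 1 + ((kk : ℝ) - 1) by ring, two_rpow_add, ENNReal.rpow_one,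
          two_mul]
      rw [h2, ENNReal.rpow_intCast] at h1
      exact absurd h1 (not_le.2 h)
    calc ∑' α : {α : T // (2 : ℝ≥0∞) ^ kk < Mop μ Sbar g α}, σ α.1
        ≤ ∑' α : {α : T // c < Mop μ Sbar g₂ α}, σ α.1 := by
          refine ENNReal.tsum_comp_le_tsum_of_injective
            (f := fun α : {α : T // (2 : ℝ≥0∞) ^ kk < Mop μ Sbar g α} =>
              (⟨α.1, hincl α.1 α.2⟩ : {α : T // c < Mop μ Sbar g₂ α}))
            (fun a b h => Subtype.ext
              (congrArg (fun x : {α : T // c < Mop μ Sbar g₂ α} => (x : T)) h)) (fun α => σ α.1)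
      _ ≤ C * ((∫⁻ x, g₂ x ∂μ) / c) :=
          weak_type hmeas hdisj σ C htree g₂ c (two_rpow_ne_zero _) (two_rpow_ne_top _)
  -- measurability of the truncations
  have hg₂m : ∀ kk : ℤ, Measurable
      (fun x => (if (2 : ℝ≥0∞) ^ ((kk : ℝ) - 1) < g x then g x else 0)) := fun kk =>
    Measurable.ite (measurableSet_lt measurable_const hg) hg measurable_const
  calc ∑' α : T, F α = ∑' α : N, F α.1 := hA
    _ ≤ ∑' α : N, f (j α) := ENNReal.tsum_le_tsum hbd
    _ ≤ ∑' x, f x := ENNReal.tsum_comp_le_tsum_of_injective hjinj f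
    _ = ∑' kk : ℤ, ∑' α : {α : T // (2 : ℝ≥0∞) ^ kk < Mop μ Sbar g α},
          2 ^ (((kk : ℝ) + 1) * q) * σ α.1 := ENNReal.tsum_sigma' f
    _ = ∑' kk : ℤ, 2 ^ (((kk : ℝ) + 1) * q)
          * ∑' α : {α : T // (2 : ℝ≥0∞) ^ kk < Mop μ Sbar g α}, σ α.1 :=
        tsum_congr fun kk => ENNReal.tsum_mul_left
    _ ≤ ∑' kk : ℤ, 2 ^ (((kk : ℝ) + 1) * q)
          * (C * ((∫⁻ x, (if (2 : ℝ≥0∞) ^ ((kk : ℝ) - 1) < g x then g x else 0) ∂μ)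
              / (2 ^ ((kk : ℝ) - 1)))) :=
        ENNReal.tsum_le_tsum fun kk => mul_le_mul_right (hweak kk) _
    _ = ∑' kk : ℤ, C * 2 ^ (q + 1)
          * (2 ^ ((kk : ℝ) * (q - 1))
            * ∫⁻ x, (if (2 : ℝ≥0∞) ^ ((kk : ℝ) - 1) < g x then g x else 0) ∂μ) := by
        refine tsum_congr fun kk => ?_
        set X := ∫⁻ x, (if (2 : ℝ≥0∞) ^ ((kk : ℝ) - 1) < g x then g x else 0) ∂μ
        calc 2 ^ (((kk : ℝ) + 1) * q) * (C * (X / 2 ^ ((kk : ℝ) - 1)))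
            = C * (2 ^ (((kk : ℝ) + 1) * q) * 2 ^ (-((kk : ℝ) - 1)) * X) := by
              rw [div_eq_mul_inv, ← ENNReal.rpow_neg]
              ring
          _ = C * (2 ^ ((q + 1) + (kk : ℝ) * (q - 1)) * X) := by
              rw [← two_rpow_add]
              congr 3
              ring
          _ = C * 2 ^ (q + 1) * (2 ^ ((kk : ℝ) * (q - 1)) * X) := by
              rw [two_rpow_add]
              ring
    _ = C * 2 ^ (q + 1) * ∑' kk : ℤ, (2 ^ ((kk : ℝ) * (q - 1))
          * ∫⁻ x, (if (2 : ℝ≥0∞) ^ ((kk : ℝ) - 1) < g x then g x else 0) ∂μ) :=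
        ENNReal.tsum_mul_left
    _ = C * 2 ^ (q + 1) * ∑' kk : ℤ,
          ∫⁻ x, 2 ^ ((kk : ℝ) * (q - 1))
            * (if (2 : ℝ≥0∞) ^ ((kk : ℝ) - 1) < g x then g x else 0) ∂μ := by
        congr 1
        exact tsum_congr fun kk =>
          (lintegral_const_mul' _ _ (two_rpow_ne_top _)).symm
    _ = C * 2 ^ (q + 1) * ∫⁻ x, ∑' kk : ℤ, 2 ^ ((kk : ℝ) * (q - 1))
            * (if (2 : ℝ≥0∞) ^ ((kk : ℝ) - 1) < g x then g x else 0) ∂μ := by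
        congr 1
        exact (lintegral_tsum fun kk => ((hg₂m kk).const_mul _).aemeasurable).symm
    _ ≤ C * 2 ^ (q + 1) * ∫⁻ x, 2 ^ (q - 1) * (1 - 2 ^ (1 - q))⁻¹ * g x ^ q ∂μ :=
        mul_le_mul_right (lintegral_mono fun x => pointwise_sum hq (g x)) _
    _ = C * 2 ^ (q + 1) * (2 ^ (q - 1) * (1 - 2 ^ (1 - q))⁻¹ * I) := by
        rw [lintegral_const_mul' _ _
          (ENNReal.mul_ne_top (two_rpow_ne_top _) (geom_const_ne_top hq))]
    _ ≤ (D + 1) * I := by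
        rw [hD]
        refine le_trans (le_of_eq (by ring)) (mul_le_mul_left le_self_add I)
end

/-- Theorem 2 (tree maximal theorem): for a rooted tree `T` (root `⊥`), a positive
weight `ρ`, a positive measure `μ` on the closure `Ω = T̄` with shadows `Sbar α`,
and `σ(α) = ρ(α)^(1−p') μ(S̄(α))^(p')`, the tree condition
`Σ_{β ≥ α} σ(β) ≤ C μ(S̄(α))` is equivalent to the maximal inequality
`Σ_α (Mg α)^(p') σ(α) ≤ C' ∫ g^(p') dμ`, where
`Mg(α) = max_{⊥ ≤ β ≤ α} (1/μ(S̄(β))) ∫_{S̄(β)} g dμ`. -/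
theorem stmt5 {T Ω : Type*} [PartialOrder T] [OrderBot T] [Countable T]
    [WellFoundedLT T] [MeasurableSpace Ω] (μ : Measure Ω) (Sbar : T → Set Ω)
    (hmeas : ∀ α, MeasurableSet (Sbar α))
    (hanti : ∀ α β : T, α ≤ β → Sbar β ⊆ Sbar α)
    (hdisj : ∀ α β : T, ¬ α ≤ β → ¬ β ≤ α → Sbar α ∩ Sbar β = ∅)
    (hpos : ∀ α, 0 < μ (Sbar α))
    (p p' : ℝ) (hp : 1 < p) (hp' : p' = p / (p - 1))
    (ρ : T → ℝ≥0∞) (hρ : ∀ α, ρ α ≠ 0 ∧ ρ α ≠ ⊤) :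
    (∃ C : ℝ≥0∞, C ≠ ⊤ ∧ ∀ α : T,
        ∑' β : {β : T // α ≤ β}, ρ β.1 ^ (1 - p') * μ (Sbar β.1) ^ p'
          ≤ C * μ (Sbar α)) ↔
    (∃ C' : ℝ≥0∞, C' ≠ ⊤ ∧ ∀ g : Ω → ℝ≥0∞, Measurable g →
        ∑' α : T,
            (⨆ β ∈ Set.Iic α, (∫⁻ x in Sbar β, g x ∂μ) / μ (Sbar β)) ^ p'
              * (ρ α ^ (1 - p') * μ (Sbar α) ^ p')
          ≤ C' * ∫⁻ x, g x ^ p' ∂μ) := by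
  have hq : 1 < p' := by
    rw [hp', lt_div_iff₀ (by linarith : (0 : ℝ) < p - 1)]
    linarith
  have hσ0 : ∀ α, ρ α ^ (1 - p') * μ (Sbar α) ^ p' ≠ 0 := by
    intro α
    refine mul_ne_zero ?_ ?_
    · exact (ENNReal.rpow_pos (pos_iff_ne_zero.2 (hρ α).1) (hρ α).2).ne'
    · by_cases ht : μ (Sbar α) = ⊤
      · rw [ht, ENNReal.top_rpow_of_pos (by linarith)]
        exact ENNReal.top_ne_zero
      · exact (ENNReal.rpow_pos (hpos α) ht).ne'
  constructor
  · rintro ⟨C, hC, htree⟩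
    refine ⟨C * 2 ^ (p' + 1) * (2 ^ (p' - 1) * (1 - 2 ^ (1 - p'))⁻¹) + 1, ?_, ?_⟩
    · refine ENNReal.add_ne_top.2 ⟨?_, ENNReal.one_ne_top⟩
      exact ENNReal.mul_ne_top (ENNReal.mul_ne_top hC (two_rpow_ne_top _))
        (ENNReal.mul_ne_top (two_rpow_ne_top _) (geom_const_ne_top hq))
    · intro g hg
      exact strong_type hmeas hdisj (fun α => ρ α ^ (1 - p') * μ (Sbar α) ^ p')
        hσ0 hC htree hq g hg
  · rintro ⟨C', hC', hmax⟩
    refine ⟨C' + 1, ENNReal.add_ne_top.2 ⟨hC', ENNReal.one_ne_top⟩, ?_⟩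
    intro α
    by_cases hfin : ∀ β, α ≤ β → μ (Sbar β) ≠ ⊤
    · set g : Ω → ℝ≥0∞ := (Sbar α).indicator (fun _ => 1) with hgdef
      have hgm : Measurable g := measurable_const.indicator (hmeas α)
      have hint : ∫⁻ x, g x ^ p' ∂μ = μ (Sbar α) := by
        have hpow : ∀ x, g x ^ p' = g x := by
          intro x
          by_cases hx : x ∈ Sbar α
          · simp [hgdef, hx]
          · simp [hgdef, hx, ENNReal.zero_rpow_of_pos (by linarith : (0 : ℝ) < p')]
        rw [lintegral_congr hpow, hgdef]
        rw [lintegral_indicator (hmeas α), setLIntegral_one]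
      have hMge : ∀ β : {β : T // α ≤ β}, (1 : ℝ≥0∞) ≤ Mop μ Sbar g β.1 := by
        rintro ⟨β, hβ⟩
        have hsub : Sbar β ⊆ Sbar α := hanti α β hβ
        have hA : (∫⁻ x in Sbar β, g x ∂μ) / μ (Sbar β) = 1 := by
          have h1 : (∫⁻ x in Sbar β, g x ∂μ) = μ (Sbar β) := by
            rw [hgdef, lintegral_indicator (hmeas α), setLIntegral_one,
              Measure.restrict_apply (hmeas α), Set.inter_eq_self_of_subset_right hsub]
          rw [h1, ENNReal.div_self (hpos β).ne' (hfin β hβ)]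
        rw [← hA]
        exact le_Mop le_rfl
      calc ∑' β : {β : T // α ≤ β}, ρ β.1 ^ (1 - p') * μ (Sbar β.1) ^ p'
          ≤ ∑' β : {β : T // α ≤ β},
              (Mop μ Sbar g β.1) ^ p' * (ρ β.1 ^ (1 - p') * μ (Sbar β.1) ^ p') := by
            refine ENNReal.tsum_le_tsum fun β => ?_
            nth_rewrite 1 [← one_mul (ρ β.1 ^ (1 - p') * μ (Sbar β.1) ^ p')]
            exact mul_le_mul_left (ENNReal.one_le_rpow (hMge β) (by linarith)) _
        _ ≤ ∑' β : T, (Mop μ Sbar g β) ^ p' * (ρ β ^ (1 - p') * μ (Sbar β) ^ p') :=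
            ENNReal.tsum_comp_le_tsum_of_injective Subtype.val_injective _
        _ ≤ C' * ∫⁻ x, g x ^ p' ∂μ := hmax g hgm
        _ = C' * μ (Sbar α) := by rw [hint]
        _ ≤ (C' + 1) * μ (Sbar α) := mul_le_mul_left le_self_add _
    · push_neg at hfin
      obtain ⟨β, hβ, ht⟩ := hfin
      have htop : μ (Sbar α) = ⊤ := top_le_iff.1 (ht ▸ measure_mono (hanti α β hβ))
      rw [htop, ENNReal.mul_top (by simp)]
      exact le_top
end

section
/- (Discrete Hardy inequality on the tree under the tree condition, p = 2 unweighted case) Let T be a rooted dyadic tree and μ a finitely supported positive measure on T. If Σ_{β ≥ α} μ(S(β))² ≤ C μ(S(α)) for all α ∈ T (where S(α) = {β : β ≥ α} and μ(S(α)) = Σ_{β ≥ α} μ(β)), then Σ_{α∈T} (Iφ(α))² μ(α) ≤ C' Σ_{α∈T} φ(α)² for all φ : T → [0,∞), with C' depending only on C. -/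
open ENNReal

/-- The discrete Hardy operator on the dyadic tree of finite binary strings
(root `[]`, order: `α ≤ β` iff `α` is a suffix of `β`):
`Iφ(α) = Σ_{o ≤ β ≤ α} φ(β)`. -/
noncomputable def treeHardy (φ : List Bool → ℝ≥0∞) (α : List Bool) : ℝ≥0∞ :=
  (α.tails.map φ).sum

/-- `μ(S(α)) = Σ_{β ≥ α} μ(β)`, the measure of the shadow of `α`. -/
noncomputable def shadowMass (μ : List Bool → ℝ≥0∞) (α : List Bool) : ℝ≥0∞ :=
  ∑' β : {β : List Bool // α <:+ β}, μ β.1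

lemma treeHardy_cons (φ : List Bool → ℝ≥0∞) (b : Bool) (β : List Bool) :
    treeHardy φ (b :: β) = φ (b :: β) + treeHardy φ β := by
  simp [treeHardy]

lemma treeHardy_nil (φ : List Bool → ℝ≥0∞) : treeHardy φ [] = φ [] := by
  simp [treeHardy]

lemma nodup_tails (l : List Bool) : l.tails.Nodup := by
  induction l with
  | nil => simp
  | cons b t ih =>
    rw [List.tails_cons, List.nodup_cons]
    refine ⟨fun h => ?_, ih⟩
    have := List.mem_tails _ _ |>.1 h
    have hlen := List.IsSuffix.length_le this
    simp at hlen

/-- A list sum over the suffixes of `α` as a `tsum` of an indicator. -/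
lemma tails_sum_eq_tsum (g : List Bool → ℝ≥0∞) (α : List Bool) :
    (α.tails.map g).sum = ∑' β : List Bool, Set.indicator {β | β <:+ α} g β := by
  classical
  have hset : ({β | β <:+ α} : Set (List Bool)) = ↑(α.tails.toFinset) := by
    ext β; simp [List.mem_tails]
  rw [hset, ← List.sum_toFinset _ (nodup_tails α)]
  exact sum_eq_tsum_indicator _ _

/-- Key exchange (Fubini) lemma:
`∑_α (Σ_{β ≤ α} g β) μ(α) = ∑_β g β μ(S(β))`. -/
lemma tsum_tails_mul (g μ : List Bool → ℝ≥0∞) :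
    ∑' α : List Bool, (α.tails.map g).sum * μ α
      = ∑' β : List Bool, g β * shadowMass μ β := by
  classical
  have h1 : ∀ α : List Bool, (α.tails.map g).sum * μ α
      = ∑' β : List Bool, Set.indicator {β | β <:+ α} g β * μ α := by
    intro α
    rw [tails_sum_eq_tsum, ENNReal.tsum_mul_right]
  calc ∑' α : List Bool, (α.tails.map g).sum * μ α
      = ∑' α, ∑' β, Set.indicator {β | β <:+ α} g β * μ α := by
        exact tsum_congr h1
    _ = ∑' β, ∑' α, Set.indicator {β | β <:+ α} g β * μ α := ENNReal.tsum_comm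
    _ = ∑' β, ∑' α, g β * Set.indicator {α | β <:+ α} μ α := by
        refine tsum_congr fun β => tsum_congr fun α => ?_
        by_cases h : β <:+ α
        · simp [Set.indicator_of_mem, h]
        · simp [Set.indicator_of_notMem, h]
    _ = ∑' β, g β * shadowMass μ β := by
        refine tsum_congr fun β => ?_
        rw [ENNReal.tsum_mul_left]
        congr 1
        exact (tsum_subtype {α | β <:+ α} μ).symm

/-- Chain expansion: `(Iφ α)² ≤ 2 Σ_{β ≤ α} φ(β) Iφ(β)`. -/
lemma sq_treeHardy_le (φ : List Bool → ℝ≥0∞) (α : List Bool) :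
    treeHardy φ α ^ 2 ≤ 2 * (α.tails.map (fun β => φ β * treeHardy φ β)).sum := by
  induction α with
  | nil =>
    have h : (([] : List Bool).tails.map (fun β => φ β * treeHardy φ β)).sum
        = φ [] * φ [] := by simp [treeHardy]
    rw [h, treeHardy_nil, sq]
    exact le_mul_of_one_le_left zero_le one_le_two
  | cons b β ih =>
    rw [treeHardy_cons, List.tails_cons, List.map_cons, List.sum_cons, add_sq,
      treeHardy_cons, mul_add]
    have h1 : φ (b :: β) ^ 2 + 2 * φ (b :: β) * treeHardy φ β
        ≤ 2 * (φ (b :: β) * (φ (b :: β) + treeHardy φ β)) := by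
      have h0 : φ (b :: β) ^ 2 ≤ 2 * φ (b :: β) ^ 2 :=
        le_mul_of_one_le_left zero_le one_le_two
      calc φ (b :: β) ^ 2 + 2 * φ (b :: β) * treeHardy φ β
          ≤ 2 * φ (b :: β) ^ 2 + 2 * φ (b :: β) * treeHardy φ β :=
            add_le_add_left h0 _
        _ = 2 * (φ (b :: β) * (φ (b :: β) + treeHardy φ β)) := by ring
    calc φ (b :: β) ^ 2 + 2 * φ (b :: β) * treeHardy φ β + treeHardy φ β ^ 2
        ≤ 2 * (φ (b :: β) * (φ (b :: β) + treeHardy φ β))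
            + 2 * (β.tails.map (fun γ => φ γ * treeHardy φ γ)).sum :=
          add_le_add h1 ih
      _ = _ := by ring

/-- Increments of `Iφ²` along the tree. -/
noncomputable def sqInc (φ : List Bool → ℝ≥0∞) : List Bool → ℝ≥0∞
  | [] => treeHardy φ [] ^ 2
  | (b :: β) => treeHardy φ (b :: β) ^ 2 - treeHardy φ β ^ 2

lemma sum_sqInc (φ : List Bool → ℝ≥0∞) (α : List Bool) :
    (α.tails.map (sqInc φ)).sum = treeHardy φ α ^ 2 := by
  induction α with
  | nil => simp [sqInc]
  | cons b β ih =>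
    rw [List.tails_cons, List.map_cons, List.sum_cons, ih]
    have hle : treeHardy φ β ^ 2 ≤ treeHardy φ (b :: β) ^ 2 := by
      gcongr
      rw [treeHardy_cons]
      exact le_add_self
    show treeHardy φ (b :: β) ^ 2 - treeHardy φ β ^ 2 + treeHardy φ β ^ 2 = _
    exact tsub_add_cancel_of_le hle

lemma two_mul_le_sq_add_sq (a b : ℝ≥0∞) : 2 * (a * b) ≤ a ^ 2 + b ^ 2 := by
  rcases eq_or_ne a ⊤ with ha | ha
  · rcases eq_or_ne b 0 with hb | hb
    · simp [hb]
    · subst ha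
      rw [ENNReal.top_mul hb]
      simp [pow_eq_top_iff]
  rcases eq_or_ne b ⊤ with hb | hb
  · subst hb
    rcases eq_or_ne a 0 with ha0 | ha0
    · simp [ha0]
    · rw [ENNReal.mul_top ha0]
      simp [pow_eq_top_iff]
  lift a to NNReal using ha
  lift b to NNReal using hb
  rw [← ENNReal.coe_mul, ← ENNReal.coe_pow, ← ENNReal.coe_pow]
  rw [show ((2 : ℝ≥0∞) = ((2 : NNReal) : ℝ≥0∞)) by norm_num, ← ENNReal.coe_mul,
    ← ENNReal.coe_add, ENNReal.coe_le_coe, ← NNReal.coe_le_coe]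
  push_cast
  nlinarith [sq_nonneg ((a : ℝ) - b)]

lemma list_sum_ne_top {l : List (List Bool)} {φ : List Bool → ℝ≥0∞}
    (h : ∀ β, φ β ≠ ⊤) : (l.map φ).sum ≠ ⊤ := by
  induction l with
  | nil => simp
  | cons b t ih => simp [ENNReal.add_ne_top, h b, ih]

/-- Discrete Hardy inequality on the dyadic tree under the tree condition
(`p = 2`, unweighted): if `μ` is a finitely supported positive measure on the
tree with `Σ_{β ≥ α} μ(S(β))² ≤ C μ(S(α))` for all `α`, then
`Σ_α (Iφ(α))² μ(α) ≤ C' Σ_α φ(α)²` for all `φ ≥ 0`, with `C'` depending only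
on `C`. -/
theorem stmt18 (C : ℝ≥0∞) (hC : C ≠ ⊤) :
    ∃ C' : ℝ≥0∞, C' ≠ ⊤ ∧
      ∀ μ : List Bool → ℝ≥0∞, (Function.support μ).Finite → (∀ α, μ α ≠ ⊤) →
        (∀ α : List Bool,
          ∑' β : {β : List Bool // α <:+ β}, (shadowMass μ β.1) ^ 2
            ≤ C * shadowMass μ α) →
        ∀ φ : List Bool → ℝ≥0∞,
          ∑' α : List Bool, (treeHardy φ α) ^ 2 * μ α
            ≤ C' * ∑' α : List Bool, (φ α) ^ 2 := by
  classical
  set t : ℝ≥0∞ := 2 * (C + 1) with ht_def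
  have htne : t ≠ ⊤ := by
    simp [ht_def, ENNReal.mul_ne_top, ENNReal.add_ne_top, hC]
  have ht0 : t ≠ 0 := by simp [ht_def]
  refine ⟨2 * t, by simp [ENNReal.mul_ne_top, htne], ?_⟩
  intro μ hfin hμtop htree φ
  set A : ℝ≥0∞ := ∑' α : List Bool, (treeHardy φ α) ^ 2 * μ α with hA_def
  set B : ℝ≥0∞ := ∑' α : List Bool, (φ α) ^ 2 with hB_def
  rcases eq_or_ne B ⊤ with hB | hB
  · rw [hB, ENNReal.mul_top (by simp [ht_def])]
    exact le_top
  -- B finite: every φ value is finite, hence every treeHardy value is finite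
  have hφtop : ∀ β, φ β ≠ ⊤ := by
    intro β hβ
    have h2 : (⊤ : ℝ≥0∞) ≤ B := by
      calc (⊤ : ℝ≥0∞) = ⊤ ^ 2 := by rw [sq, ENNReal.top_mul_top]
        _ = (φ β) ^ 2 := by rw [hβ]
        _ ≤ B := ENNReal.le_tsum β
    exact hB (top_le_iff.1 h2)
  have hItop : ∀ α, treeHardy φ α ≠ ⊤ := fun α => list_sum_ne_top hφtop
  -- A is finite
  have hA : A ≠ ⊤ := by
    have hsum : A = ∑ α ∈ hfin.toFinset, (treeHardy φ α) ^ 2 * μ α := by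
      refine tsum_eq_sum fun α hα => ?_
      have : μ α = 0 := by
        by_contra h
        exact hα (hfin.mem_toFinset.2 h)
      simp [this]
    rw [hsum]
    refine (ENNReal.sum_lt_top.2 fun α _ => ?_).ne
    exact ENNReal.mul_lt_top (ENNReal.pow_ne_top (hItop α)).lt_top
      (hμtop α).lt_top
  -- Step 1 + exchange: A ≤ 2 ∑ φ(β) Iφ(β) μ(S(β))
  have step1 : A ≤ 2 * ∑' β : List Bool, φ β * treeHardy φ β * shadowMass μ β := by
    calc A ≤ ∑' α : List Bool,
          (2 * (α.tails.map (fun β => φ β * treeHardy φ β)).sum) * μ α := by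
          refine ENNReal.tsum_le_tsum fun α => ?_
          exact mul_le_mul_left (sq_treeHardy_le φ α) (μ α)
      _ = 2 * ∑' α : List Bool,
          (α.tails.map (fun β => φ β * treeHardy φ β)).sum * μ α := by
          rw [← ENNReal.tsum_mul_left]
          exact tsum_congr fun α => by ring
      _ = 2 * ∑' β : List Bool, φ β * treeHardy φ β * shadowMass μ β := by
          rw [tsum_tails_mul (fun β => φ β * treeHardy φ β) μ]
  -- Step 4: the tree condition gives ∑ Iφ² μ(S)² ≤ C A
  have step4 : ∑' β : List Bool, treeHardy φ β ^ 2 * shadowMass μ β ^ 2 ≤ C * A := by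
    set ν : List Bool → ℝ≥0∞ := fun β => shadowMass μ β ^ 2 with hν
    have key1 : ∑' β : List Bool, treeHardy φ β ^ 2 * ν β
        = ∑' γ : List Bool, sqInc φ γ * shadowMass ν γ := by
      rw [← tsum_tails_mul (sqInc φ) ν]
      exact tsum_congr fun β => by rw [sum_sqInc]
    have key2 : ∀ γ, shadowMass ν γ ≤ C * shadowMass μ γ := by
      intro γ
      exact htree γ
    calc ∑' β : List Bool, treeHardy φ β ^ 2 * ν β
        = ∑' γ : List Bool, sqInc φ γ * shadowMass ν γ := key1
      _ ≤ ∑' γ : List Bool, sqInc φ γ * (C * shadowMass μ γ) :=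
          ENNReal.tsum_le_tsum fun γ => mul_le_mul_right (key2 γ) _
      _ = C * ∑' γ : List Bool, sqInc φ γ * shadowMass μ γ := by
          rw [← ENNReal.tsum_mul_left]
          exact tsum_congr fun γ => by ring
      _ = C * ∑' β : List Bool, treeHardy φ β ^ 2 * μ β := by
          rw [← tsum_tails_mul (sqInc φ) μ]
          congr 1
          exact tsum_congr fun β => by rw [sum_sqInc]
      _ = C * A := rfl
  -- AM-GM with parameter t
  have amgm : ∀ β : List Bool,
      2 * (φ β * treeHardy φ β * shadowMass μ β)
        ≤ t * φ β ^ 2 + t⁻¹ * (treeHardy φ β ^ 2 * shadowMass μ β ^ 2) := by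
    intro β
    have h2 := two_mul_le_sq_add_sq (t * φ β) (treeHardy φ β * shadowMass μ β)
    have h3 : t⁻¹ * (2 * (t * φ β * (treeHardy φ β * shadowMass μ β)))
        ≤ t⁻¹ * ((t * φ β) ^ 2 + (treeHardy φ β * shadowMass μ β) ^ 2) :=
      mul_le_mul_right h2 _
    have htt : t⁻¹ * t = 1 := ENNReal.inv_mul_cancel ht0 htne
    have htt2 : t⁻¹ * t ^ 2 = t := by rw [sq, ← mul_assoc, htt, one_mul]
    calc 2 * (φ β * treeHardy φ β * shadowMass μ β)
        = (t⁻¹ * t) * (2 * (φ β * treeHardy φ β * shadowMass μ β)) := by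
          rw [htt, one_mul]
      _ = t⁻¹ * (2 * (t * φ β * (treeHardy φ β * shadowMass μ β))) := by ring
      _ ≤ t⁻¹ * ((t * φ β) ^ 2 + (treeHardy φ β * shadowMass μ β) ^ 2) := h3
      _ = (t⁻¹ * t ^ 2) * φ β ^ 2 + t⁻¹ * (treeHardy φ β ^ 2 * shadowMass μ β ^ 2) := by
          rw [mul_pow, mul_pow]; ring
      _ = t * φ β ^ 2 + t⁻¹ * (treeHardy φ β ^ 2 * shadowMass μ β ^ 2) := by
          rw [htt2]
  -- putting it together: A ≤ t B + t⁻¹ C A ≤ t B + A/2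
  have main : A ≤ t * B + 2⁻¹ * A := by
    calc A ≤ 2 * ∑' β : List Bool, φ β * treeHardy φ β * shadowMass μ β := step1
      _ = ∑' β : List Bool, 2 * (φ β * treeHardy φ β * shadowMass μ β) :=
          ENNReal.tsum_mul_left.symm
      _ ≤ ∑' β : List Bool,
          (t * φ β ^ 2 + t⁻¹ * (treeHardy φ β ^ 2 * shadowMass μ β ^ 2)) :=
          ENNReal.tsum_le_tsum amgm
      _ = t * B + t⁻¹ * ∑' β : List Bool,
            treeHardy φ β ^ 2 * shadowMass μ β ^ 2 := by
          rw [ENNReal.tsum_add, ENNReal.tsum_mul_left, ENNReal.tsum_mul_left]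
      _ ≤ t * B + t⁻¹ * (C * A) :=
          add_le_add_right (mul_le_mul_right step4 _) _
      _ ≤ t * B + 2⁻¹ * A := by
          refine add_le_add_right ?_ _
          rw [← mul_assoc]
          refine mul_le_mul_left ?_ A
          rw [ht_def, ENNReal.mul_inv (Or.inl (by norm_num)) (Or.inl (by norm_num))]
          rw [mul_assoc]
          refine mul_le_of_le_one_right zero_le ?_
          rw [ENNReal.inv_mul_le_iff (by simp) (by simp [ENNReal.add_ne_top, hC])]
          simpa using le_add_self
  -- cancel A/2
  have half : 2⁻¹ * A ≤ t * B := by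
    have hsplit : 2⁻¹ * A + 2⁻¹ * A = A := by
      rw [← two_mul, ← mul_assoc, ENNReal.mul_inv_cancel (by norm_num) (by norm_num),
        one_mul]
    have h' : 2⁻¹ * A + 2⁻¹ * A ≤ t * B + 2⁻¹ * A := by rw [hsplit]; exact main
    have hhalfne : 2⁻¹ * A ≠ ⊤ := ENNReal.mul_ne_top (by norm_num) hA
    exact (ENNReal.add_le_add_iff_right hhalfne).1 h'
  calc A = 2 * (2⁻¹ * A) := by
        rw [← mul_assoc, ENNReal.mul_inv_cancel (by norm_num) (by norm_num), one_mul]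
    _ ≤ 2 * (t * B) := mul_le_mul_right half _
    _ = 2 * t * B := by ring
end
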